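/- Let A be a k×k strictly upper triangular integer matrix such that B = (I-A)^{-1} has all nonnegative entries. Let b_i = Σ_j B[j,i] (the i-th column sum of B). Then for every n ≥ 0, the number of λ ∈ P_A with λ_1 + ... + λ_k = n equals the number of k-tuples (s_1,...,s_k) of nonnegative integers with b_1·s_1 + ... + b_k·s_k = n. Equivalently, the weight generating function of P_A is Π_{i=1}^k (1-q^{b_i})^{-1}. -/

import Mathlib

lemma pow_entry_zero (k : ℕ) (A : Matrix (Fin k) (Fin k) ℤ)
    (hA : ∀ i j : Fin k, j ≤ i → A i j = 0) :
    ∀ m (i j : Fin k), (j : ℕ) < (i : ℕ) + m → (A ^ m) i j = 0 := by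
  intro m
  induction m with
  | zero =>
    intro i j hij
    have : i ≠ j := by
      intro h; subst h; omega
    simp [Matrix.one_apply, this]
  | succ m ih =>
    intro i j hij
    rw [pow_succ, Matrix.mul_apply]
    apply Finset.sum_eq_zero
    intro l _
    by_cases hl : (l : ℕ) < (i : ℕ) + m
    · rw [ih i l hl, zero_mul]
    · have : j ≤ l := by
        apply Fin.le_def.mpr; omega
      rw [hA l j this, mul_zero]

lemma pow_k_zero (k : ℕ) (A : Matrix (Fin k) (Fin k) ℤ)
    (hA : ∀ i j : Fin k, j ≤ i → A i j = 0) : A ^ k = 0 := by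
  ext i j
  exact pow_entry_zero k A hA k i j (by omega)

/-- if `B = (I-A)⁻¹` is nonnegative, the number of `λ ∈ P_A` of weight `n`
equals the number of tuples `s ∈ ℕ^k` with `∑ bᵢ sᵢ = n`, where `bᵢ` is the `i`-th column
sum of `B`.  (Equivalently the weight generating function of `P_A` is `∏ (1-q^{bᵢ})⁻¹`.) -/
theorem stmt_3 (k n : ℕ) (A : Matrix (Fin k) (Fin k) ℤ)
    (hA : ∀ i j : Fin k, j ≤ i → A i j = 0)
    (hB : ∀ i j : Fin k, 0 ≤ (∑ m ∈ Finset.range k, A ^ m) i j) :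
    {lam : Fin k → ℤ | (∀ i, ∑ j, A i j * lam j ≤ lam i) ∧ ∑ i, lam i = (n : ℤ)}.ncard =
    {s : Fin k → ℕ |
      ∑ i, (∑ j, (∑ m ∈ Finset.range k, A ^ m) j i) * (s i : ℤ) = (n : ℤ)}.ncard := by
  classical
  set B : Matrix (Fin k) (Fin k) ℤ := ∑ m ∈ Finset.range k, A ^ m with hBdef
  have hAk : A ^ k = 0 := pow_k_zero k A hA
  -- B * (1 - A) = 1 and (1 - A) * B = 1
  have h1 : B * (1 - A) = 1 := by
    have := geom_sum_mul A k
    rw [hAk] at this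
    have h2 : B * (A - 1) = -1 := by simpa [hBdef] using this
    have : B * (1 - A) = -(B * (A - 1)) := by rw [← mul_neg, neg_sub]
    rw [this, h2, neg_neg]
  have h2 : (1 - A) * B = 1 := by
    have := mul_geom_sum A k
    rw [hAk] at this
    have h2 : (A - 1) * B = -1 := by simpa [hBdef] using this
    have : (1 - A) * B = -((A - 1) * B) := by rw [← neg_mul, neg_sub]
    rw [this, h2, neg_neg]
  set S := {lam : Fin k → ℤ | (∀ i, ∑ j, A i j * lam j ≤ lam i) ∧ ∑ i, lam i = (n : ℤ)}
  set T := {s : Fin k → ℕ | ∑ i, (∑ j, B j i) * (s i : ℤ) = (n : ℤ)}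
  -- the map
  set f : (Fin k → ℤ) → (Fin k → ℕ) := fun lam i => (lam i - ∑ j, A i j * lam j).toNat
    with hf
  -- key identity: for lam, cast of f lam is (1-A).mulVec lam when ineqs hold
  have hmu : ∀ lam : Fin k → ℤ, (∀ i, ∑ j, A i j * lam j ≤ lam i) →
      (fun i => ((f lam i : ℤ))) = (1 - A).mulVec lam := by
    intro lam hlam
    funext i
    have h := hlam i
    show ((lam i - ∑ j, A i j * lam j).toNat : ℤ) = _
    rw [Int.toNat_of_nonneg (by linarith)]
    simp [Matrix.mulVec, Matrix.sub_apply, Matrix.one_apply, dotProduct, sub_mul,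
      Finset.sum_sub_distrib, Finset.sum_ite_eq, Finset.mem_univ]
  have hBmul : ∀ lam : Fin k → ℤ, B.mulVec ((1 - A).mulVec lam) = lam := by
    intro lam
    rw [Matrix.mulVec_mulVec, h1, Matrix.one_mulVec]
  have hBmul' : ∀ v : Fin k → ℤ, (1 - A).mulVec (B.mulVec v) = v := by
    intro v
    rw [Matrix.mulVec_mulVec, h2, Matrix.one_mulVec]
  have hsum : ∀ v : Fin k → ℤ, ∑ i, B.mulVec v i = ∑ i, (∑ j, B j i) * v i := by
    intro v
    simp only [Matrix.mulVec, dotProduct]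
    rw [Finset.sum_comm]
    congr 1; ext i
    rw [Finset.sum_mul]
  have hbij : Set.BijOn f S T := by
    refine ⟨?_, ?_, ?_⟩
    · intro lam hlam
      obtain ⟨h1', h2'⟩ := hlam
      have hmu' := hmu lam h1'
      show ∑ i, (∑ j, B j i) * ((f lam i : ℤ)) = (n : ℤ)
      have : ∑ i, (∑ j, B j i) * ((f lam i : ℤ)) =
          ∑ i, (∑ j, B j i) * ((1 - A).mulVec lam i) := by
        congr 1; ext i; rw [← congrFun hmu' i]
      rw [this, ← hsum, hBmul, h2']
    · intro l1 hl1 l2 hl2 hfe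
      have e1 := hmu l1 hl1.1
      have e2 := hmu l2 hl2.1
      have : (1 - A).mulVec l1 = (1 - A).mulVec l2 := by
        rw [← e1, ← e2, hfe]
      calc l1 = B.mulVec ((1 - A).mulVec l1) := (hBmul l1).symm
        _ = B.mulVec ((1 - A).mulVec l2) := by rw [this]
        _ = l2 := hBmul l2
    · intro s hs
      set v : Fin k → ℤ := fun i => (s i : ℤ) with hv
      refine ⟨B.mulVec v, ⟨?_, ?_⟩, ?_⟩
      · intro i
        have h := congrFun (hBmul' v) i
        have hexp : (1 - A).mulVec (B.mulVec v) i
            = B.mulVec v i - ∑ j, A i j * B.mulVec v j := by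
          simp [Matrix.mulVec, Matrix.sub_apply, Matrix.one_apply, dotProduct, sub_mul,
            Finset.sum_sub_distrib, Finset.sum_ite_eq, Finset.mem_univ]
        rw [hexp] at h
        have : (0:ℤ) ≤ v i := Int.natCast_nonneg _
        linarith
      · rw [hsum]
        exact hs
      · funext i
        have h := congrFun (hBmul' v) i
        have hexp : (1 - A).mulVec (B.mulVec v) i
            = B.mulVec v i - ∑ j, A i j * B.mulVec v j := by
          simp [Matrix.mulVec, Matrix.sub_apply, Matrix.one_apply, dotProduct, sub_mul,
            Finset.sum_sub_distrib, Finset.sum_ite_eq, Finset.mem_univ]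
        rw [hexp] at h
        simp only [hf, h]
        exact Int.toNat_natCast _
  rw [← hbij.image_eq, Set.ncard_image_of_injOn hbij.injOn]
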